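/- Let D be a finite set, let m ≥ 1, and let Ω be the set of all maps f : D → {W ∈ D⁺ : |W| ≤ m}. Let g ∈ Sym(D) have cycle type k_1, …, k_ℓ. Then the number of f ∈ Ω satisfying f ∘ g = φ_g ∘ f equals ∏_{i=1}^{ℓ} ( Σ_{k=1}^{m} ( Σ_{j | k_i} j·c(g, j) )^k ). -/

import Mathlib

/-- The cycle type of a permutation of a finite set, *including* fixed points as
cycles of length `1`. -/
def fullCycleType {D : Type*} [Fintype D] [DecidableEq D] (g : Equiv.Perm D) : Multiset ℕ :=
  g.cycleType + Multiset.replicate (Fintype.card D - g.support.card) 1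

/-- The number of cycles of length `j` in the cycle decomposition of `g`
(fixed points counted as cycles of length `1`). -/
def cycleCount {D : Type*} [Fintype D] [DecidableEq D] (g : Equiv.Perm D) (j : ℕ) : ℕ :=
  Multiset.count j (fullCycleType g)

section FSAux

variable {α β : Type*}

lemma list_map_eq_self {f : α → α} : ∀ {l : List α}, l.map f = l ↔ ∀ x ∈ l, f x = x := by
  intro l
  induction l with
  | nil => simp
  | cons a t ih => simp [ih]

lemma fs_map_eq (f : α → β) (x : FreeSemigroup α) :
    FreeSemigroup.map f x = ⟨f x.1, x.2.map f⟩ := by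
  obtain ⟨a, l⟩ := x
  induction l generalizing a with
  | nil => rfl
  | cons b t ih =>
    have h : (⟨a, b :: t⟩ : FreeSemigroup α) = FreeSemigroup.of a * ⟨b, t⟩ := rfl
    rw [h, map_mul, ih]
    rfl

lemma fs_map_fixed_iff (f : α → α) (x : FreeSemigroup α) :
    FreeSemigroup.map f x = x ↔ ∀ d ∈ x.1 :: x.2, f d = d := by
  obtain ⟨a, l⟩ := x
  rw [fs_map_eq]
  simp [FreeSemigroup.mk.injEq, list_map_eq_self]

lemma fs_map_comp (f : β → α) (h : α → β) (x : FreeSemigroup α) :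
    FreeSemigroup.map f (FreeSemigroup.map h x) = FreeSemigroup.map (f ∘ h) x := by
  simp [fs_map_eq, List.map_map]

lemma fs_map_id (x : FreeSemigroup α) : FreeSemigroup.map id x = x := by
  simp [fs_map_eq]

end FSAux

open Equiv Equiv.Perm Finset

section PermAux

variable {D : Type*} [Fintype D] [DecidableEq D]

/-- The orbit of `x` under `g`, as a finset. -/
def ob (g : Perm D) (x : D) : Finset D := Finset.univ.filter (g.SameCycle x)

/-- The size of the orbit of `x` under `g`. -/
def per (g : Perm D) (x : D) : ℕ := (ob g x).card

lemma mem_ob {g : Perm D} {x y : D} : y ∈ ob g x ↔ g.SameCycle x y := by simp [ob]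

lemma self_mem_ob (g : Perm D) (x : D) : x ∈ ob g x := mem_ob.2 (Equiv.Perm.SameCycle.refl g x)

lemma isCycleOn_ob (g : Perm D) (x : D) : g.IsCycleOn (ob g x) := by
  by_cases hx : g x = x
  · have h1 : ob g x = {x} := by
      ext z
      simp only [mem_ob, Finset.mem_singleton]
      constructor
      · rintro ⟨i, rfl⟩
        exact Equiv.Perm.zpow_apply_eq_self_of_apply_eq_self hx i
      · rintro rfl
        exact Equiv.Perm.SameCycle.refl _ _
    rw [h1, Finset.coe_singleton]
    exact Equiv.Perm.isCycleOn_singleton.2 hx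
  · have h1 : ob g x = (g.cycleOf x).support := by
      ext z
      rw [mem_ob, Equiv.Perm.mem_support_cycleOf_iff]
      simp [Equiv.Perm.mem_support, hx]
    rw [h1]
    exact g.isCycleOn_support_cycleOf x

lemma pow_apply_eq_iff (g : Perm D) (x : D) {n : ℕ} : (g ^ n) x = x ↔ per g x ∣ n :=
  (isCycleOn_ob g x).pow_apply_eq (self_mem_ob g x)

lemma per_pos (g : Perm D) (x : D) : 0 < per g x :=
  Finset.card_pos.2 ⟨x, self_mem_ob g x⟩

lemma ob_eq_of_sameCycle {g : Perm D} {x y : D} (h : g.SameCycle x y) : ob g x = ob g y := by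
  ext z
  simp only [mem_ob]
  exact ⟨fun hz => h.symm.trans hz, fun hz => h.trans hz⟩

lemma per_eq_of_sameCycle {g : Perm D} {x y : D} (h : g.SameCycle x y) : per g x = per g y := by
  rw [per, ob_eq_of_sameCycle h]; rfl

lemma per_eq_one_iff {g : Perm D} {x : D} : per g x = 1 ↔ g x = x := by
  rw [← Nat.dvd_one, ← pow_apply_eq_iff g x, pow_one]

lemma per_eq_card_support_cycleOf {g : Perm D} {x : D} (hx : g x ≠ x) :
    per g x = (g.cycleOf x).support.card := by
  unfold per
  congr 1
  ext z
  rw [mem_ob, Equiv.Perm.mem_support_cycleOf_iff]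
  simp [Equiv.Perm.mem_support, hx]

lemma support_mem_factor {g c : Perm D} (hc : c ∈ g.cycleFactorsFinset) {d : D}
    (hd : d ∈ c.support) : d ∈ g.support := by
  rw [Equiv.Perm.mem_support] at hd ⊢
  rw [← (Equiv.Perm.mem_cycleFactorsFinset_iff.1 hc).2 d (Equiv.Perm.mem_support.2 hd)]
  exact hd

/-- Number of points of period `j` equals `j` times the number of cycles of length `j`. -/
lemma card_per_eq (g : Perm D) (j : ℕ) :
    (Finset.univ.filter fun d => per g d = j).card = j * cycleCount g j := by
  unfold cycleCount fullCycleType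
  rw [Multiset.count_add, Multiset.count_replicate]
  rcases Nat.eq_zero_or_pos j with rfl | hj
  · rw [Finset.filter_false_of_mem fun d _ => fun h => (per_pos g d).ne' h, Finset.card_empty]
    simp
  rcases eq_or_ne j 1 with rfl | hj1
  · have hset : (Finset.univ.filter fun d => per g d = 1) = g.supportᶜ := by
      ext d
      simp [per_eq_one_iff, Equiv.Perm.mem_support]
    rw [hset, Finset.card_compl]
    have hcount : Multiset.count 1 g.cycleType = 0 := by
      rw [Multiset.count_eq_zero]
      intro h
      exact absurd (Equiv.Perm.two_le_of_mem_cycleType h) (by norm_num)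
    rw [hcount]
    simp
  · rw [if_neg (fun h => hj1 h.symm)]
    have hset : (Finset.univ.filter fun d => per g d = j)
        = g.support.filter fun d => (g.cycleOf d).support.card = j := by
      ext d
      simp only [Finset.mem_filter, Finset.mem_univ, true_and]
      constructor
      · intro hd
        have hdm : g d ≠ d := fun h => by
          rw [per_eq_one_iff.2 h] at hd; omega
        exact ⟨Equiv.Perm.mem_support.2 hdm,
          by rw [← per_eq_card_support_cycleOf hdm, hd]⟩
      · rintro ⟨hdm, hc⟩
        rw [per_eq_card_support_cycleOf (Equiv.Perm.mem_support.1 hdm), hc]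
    rw [hset]
    rw [Finset.card_eq_sum_card_fiberwise (f := fun d => g.cycleOf d)
      (t := g.cycleFactorsFinset.filter fun c => c.support.card = j)
      (fun d hd => by
        rw [Finset.mem_coe, Finset.mem_filter] at hd ⊢
        exact ⟨Equiv.Perm.cycleOf_mem_cycleFactorsFinset_iff.2 hd.1, hd.2⟩)]
    have hfib : ∀ c ∈ g.cycleFactorsFinset.filter fun c => c.support.card = j,
        ((g.support.filter fun d => (g.cycleOf d).support.card = j).filter
          fun d => g.cycleOf d = c) = c.support := by
      intro c hc
      rw [Finset.mem_filter] at hc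
      ext d
      simp only [Finset.mem_filter]
      constructor
      · rintro ⟨⟨hd1, _⟩, hd2⟩
        rw [← hd2]
        rw [Equiv.Perm.mem_support_cycleOf_iff]
        exact ⟨Equiv.Perm.SameCycle.refl _ _, hd1⟩
      · intro hd
        have h1 : c = g.cycleOf d := Equiv.Perm.cycle_is_cycleOf hd hc.1
        have h2 : d ∈ g.support := support_mem_factor hc.1 hd
        exact ⟨⟨h2, by rw [← h1]; exact hc.2⟩, h1.symm⟩
    rw [Finset.sum_congr rfl fun c hc => by rw [hfib c hc, (Finset.mem_filter.1 hc).2]]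
    rw [Finset.sum_const, smul_eq_mul]
    rw [Equiv.Perm.cycleType_def, Multiset.count_map]
    rw [mul_comm]
    congr 1
    show Multiset.card (g.cycleFactorsFinset.1.filter fun c => c.support.card = j) = _
    rw [Nat.add_zero]
    congr 1
    apply Multiset.filter_congr
    intro c _
    simp [Function.comp, eq_comm]

/-- Number of fixed points of `g ^ K`. -/
lemma card_fixed_pow (g : Perm D) {K : ℕ} (hK : K ≠ 0) :
    Fintype.card {d : D // (g ^ K) d = d} = ∑ j ∈ K.divisors, j * cycleCount g j := by
  rw [Fintype.card_subtype]
  rw [Finset.card_eq_sum_card_fiberwise (f := per g) (t := K.divisors)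
    (fun d hd => Nat.mem_divisors.2 ⟨(pow_apply_eq_iff g d).1 (by simpa using hd), hK⟩)]
  refine Finset.sum_congr rfl fun j hj => ?_
  rw [← card_per_eq g j]
  congr 1
  rw [Finset.filter_filter]
  refine Finset.filter_congr fun d _ => ?_
  simp only [and_iff_right_iff_imp]
  intro hd
  exact (pow_apply_eq_iff g d).2 (hd ▸ (Nat.mem_divisors.1 hj).1)

end PermAux

section Quot

variable {D : Type*} [Fintype D] [DecidableEq D] (g : Perm D)

/-- The type of orbits. -/
abbrev Qt := Quotient (Equiv.Perm.SameCycle.setoid g)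

instance : DecidableRel (Equiv.Perm.SameCycle.setoid g).r :=
  fun a b => inferInstanceAs (Decidable (g.SameCycle a b))

noncomputable instance : Fintype (Qt g) := Fintype.ofFinite _

/-- The common period of the elements of an orbit. -/
def perQ : Qt g → ℕ :=
  Quotient.lift (per g) fun _ _ hab => per_eq_of_sameCycle hab

lemma perQ_mk (x : D) : perQ g (Quotient.mk _ x) = per g x := rfl

lemma perQ_out (q : Qt g) : perQ g q = per g q.out := by
  conv_lhs => rw [← Quotient.out_eq q]
  rfl

lemma perQ_pos (q : Qt g) : 0 < perQ g q := by rw [perQ_out]; exact per_pos g _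

lemma card_per_fiber (j : ℕ) :
    (Finset.univ.filter fun d : D => per g d = j).card
      = j * (Finset.univ.filter fun q : Qt g => perQ g q = j).card := by
  classical
  rw [Finset.card_eq_sum_card_fiberwise (f := fun d => Quotient.mk (Equiv.Perm.SameCycle.setoid g) d)
    (t := Finset.univ.filter fun q : Qt g => perQ g q = j)
    (fun d hd => by
      rw [Finset.mem_coe, Finset.mem_filter] at hd ⊢
      exact ⟨Finset.mem_univ _, by rw [perQ_mk]; exact hd.2⟩)]
  have hfib : ∀ q ∈ Finset.univ.filter fun q : Qt g => perQ g q = j,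
      ((Finset.univ.filter fun d => per g d = j).filter
        fun d => Quotient.mk (Equiv.Perm.SameCycle.setoid g) d = q) = ob g q.out := by
    intro q hq
    rw [Finset.mem_filter] at hq
    ext d
    simp only [Finset.mem_filter, Finset.mem_univ, true_and, mem_ob]
    constructor
    · rintro ⟨_, hd2⟩
      have h3 : Quotient.mk (Equiv.Perm.SameCycle.setoid g) q.out
          = Quotient.mk (Equiv.Perm.SameCycle.setoid g) d := by
        rw [hd2, Quotient.out_eq]
      exact Quotient.exact h3
    · intro hd
      constructor
      · have h4 := per_eq_of_sameCycle hd
        rw [← h4, ← perQ_out]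
        exact hq.2
      · rw [← Quotient.out_eq q]
        exact Quot.sound (Equiv.Perm.SameCycle.symm hd)
  rw [Finset.sum_congr rfl fun q hq => by rw [hfib q hq]]
  have hcard : ∀ q ∈ Finset.univ.filter fun q : Qt g => perQ g q = j,
      (ob g q.out).card = j := by
    intro q hq
    have : per g q.out = j := by
      rw [← perQ_out]; exact (Finset.mem_filter.1 hq).2
    exact this
  rw [Finset.sum_congr rfl hcard, Finset.sum_const, smul_eq_mul, mul_comm]

/-- The multiset of orbit sizes is the full cycle type. -/
lemma map_perQ_eq_fullCycleType :
    Multiset.map (perQ g) (Finset.univ : Finset (Qt g)).val = fullCycleType g := by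
  classical
  ext j
  rw [Multiset.count_map]
  have hLHS : Multiset.card
        (Multiset.filter (fun q => j = perQ g q) (Finset.univ : Finset (Qt g)).val)
      = (Finset.univ.filter fun q : Qt g => perQ g q = j).card := by
    show _ = Multiset.card ((Finset.univ : Finset (Qt g)).val.filter fun q => perQ g q = j)
    congr 1
    apply Multiset.filter_congr
    intro q _
    exact eq_comm
  rw [hLHS]
  rcases Nat.eq_zero_or_pos j with rfl | hj
  · rw [Finset.filter_false_of_mem fun q _ => fun h => (perQ_pos g q).ne' h, Finset.card_empty]
    unfold fullCycleType
    rw [Multiset.count_add, Multiset.count_replicate, if_neg (by norm_num)]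
    rw [Multiset.count_eq_zero.2 (fun h =>
      absurd (Equiv.Perm.two_le_of_mem_cycleType h) (by norm_num))]
  · apply Nat.eq_of_mul_eq_mul_left hj
    rw [← card_per_fiber, card_per_eq]
    rfl

end Quot

section Words

variable {D : Type*} [Fintype D] [DecidableEq D]

/-- Words of length at most `m` with all letters satisfying `P`. -/
def wordEquiv (P : D → Prop) (m : ℕ) :
    {W : FreeSemigroup D // W.length ≤ m ∧ ∀ d ∈ W.1 :: W.2, P d} ≃
      (kk : Fin m) × (Fin (kk + 1) → {d // P d}) where
  toFun W := ⟨⟨W.1.2.length, by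
      have := W.2.1; simp only [FreeSemigroup.length] at this; omega⟩,
    fun i => ⟨(W.1.1 :: W.1.2).get (Fin.cast (by simp) i), W.2.2 _ (List.get_mem _ _)⟩⟩
  invFun x := ⟨⟨(x.2 0).1, List.ofFn fun j : Fin x.1 => (x.2 j.succ).1⟩,
    by simp only [FreeSemigroup.length, List.length_ofFn]; omega,
    by
      intro d hd
      rcases List.mem_cons.1 hd with h | h
      · rw [h]; exact (x.2 0).2
      · have h' : d ∈ List.ofFn fun j : Fin x.1 => ((x.2 j.succ : {d // P d}) : D) := h
        obtain ⟨j, hj⟩ := List.mem_ofFn.1 h'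
        rw [← hj]; exact (x.2 j.succ).2⟩
  left_inv W := by
    obtain ⟨⟨a, l⟩, h1, h2⟩ := W
    apply Subtype.ext
    exact congrArg₂ FreeSemigroup.mk rfl (List.ofFn_get l)
  right_inv x := by
    obtain ⟨kk, v⟩ := x
    refine Sigma.ext ?_ ?_
    · apply Fin.ext; simp
    · refine (Fin.heq_fun_iff (by simp)).mpr fun i => ?_
      apply Subtype.ext
      induction i using Fin.cases with
      | zero => rfl
      | succ j =>
        show (List.ofFn fun j : Fin _ => (v j.succ).1).get _ = _
        rw [List.get_ofFn]
        exact congrArg (fun i => (v i : D)) (Fin.ext (by simp))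
  
lemma card_words (P : D → Prop) [DecidablePred P] (m : ℕ) :
    Nat.card {W : FreeSemigroup D // W.length ≤ m ∧ ∀ d ∈ W.1 :: W.2, P d}
      = ∑ kk ∈ Finset.Icc 1 m, (Fintype.card {d // P d}) ^ kk := by
  classical
  rw [Nat.card_congr (wordEquiv P m), Nat.card_eq_fintype_card, Fintype.card_sigma]
  have h1 : ∀ kk : Fin m, Fintype.card (Fin (kk + 1) → {d // P d})
      = (Fintype.card {d // P d}) ^ ((kk : ℕ) + 1) := by
    intro kk
    rw [Fintype.card_fun, Fintype.card_fin]
  rw [Finset.sum_congr rfl fun kk _ => h1 kk]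
  rw [Fin.sum_univ_eq_sum_range (fun i => (Fintype.card {d // P d}) ^ (i + 1)) m]
  rw [← Finset.Ico_add_one_right_eq_Icc, Finset.sum_Ico_eq_sum_range]
  simp [Nat.add_comm]

end Words

section Main

variable {D : Type*} [Fintype D] [DecidableEq D] (g : Perm D)

lemma equivariant_pow {m : ℕ}
    (f : {f : D → FreeSemigroup D // ∀ x : D, (f x).length ≤ m})
    (hf : f.1 ∘ ⇑g = ⇑(FreeSemigroup.map ⇑g) ∘ f.1) (n : ℕ) (x : D) :
    f.1 ((g ^ n) x) = FreeSemigroup.map ⇑(g ^ n) (f.1 x) := by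
  induction n generalizing x with
  | zero => simp [fs_map_id]
  | succ n ih =>
    have h1 : (g ^ (n + 1)) x = (g ^ n) (g x) := by
      rw [pow_succ]; rfl
    have h2 : f.1 (g x) = FreeSemigroup.map ⇑g (f.1 x) := congrFun hf x
    rw [h1, ih (g x), h2, fs_map_comp]
    have h3 : ⇑(g ^ n) ∘ ⇑g = ⇑(g ^ (n + 1)) := by
      funext z; rw [pow_succ]; rfl
    rw [h3]

lemma map_pow_fixed {σ : Perm D} {W : FreeSemigroup D}
    (h : FreeSemigroup.map ⇑σ W = W) (t : ℕ) : FreeSemigroup.map ⇑(σ ^ t) W = W := by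
  induction t with
  | zero => simp [fs_map_id]
  | succ t ih =>
    have h3 : ⇑(σ ^ (t + 1)) = ⇑(σ ^ t) ∘ ⇑σ := by
      funext z; rw [pow_succ]; rfl
    rw [h3, ← fs_map_comp, h, ih]

lemma map_pow_eq_of_apply_eq {r : D} {W : FreeSemigroup D}
    (hW : FreeSemigroup.map ⇑(g ^ per g r) W = W) {a b : ℕ}
    (hab : (g ^ a) r = (g ^ b) r) :
    FreeSemigroup.map ⇑(g ^ a) W = FreeSemigroup.map ⇑(g ^ b) W := by
  wlog hle : b ≤ a generalizing a b
  · exact (this hab.symm (le_of_not_ge hle)).symm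
  have h1 : (g ^ (a - b)) r = r := by
    apply (g ^ b).injective
    have : (g ^ b) ((g ^ (a - b)) r) = (g ^ (b + (a - b))) r := by
      rw [pow_add]; rfl
    rw [this, Nat.add_sub_cancel' hle, hab]
  obtain ⟨s, hs⟩ := (pow_apply_eq_iff g r).1 h1
  have ha : a = b + per g r * s := by omega
  have h2 : FreeSemigroup.map ⇑(g ^ (per g r * s)) W = W := by
    rw [pow_mul]; exact map_pow_fixed (σ := g ^ per g r) hW s
  rw [ha, pow_add]
  have h3 : ⇑(g ^ b * g ^ (per g r * s)) = ⇑(g ^ b) ∘ ⇑(g ^ (per g r * s)) := rfl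
  rw [h3, ← fs_map_comp, h2]

lemma exists_pow_out_eq (x : D) :
    ∃ n : ℕ, (g ^ n) ((Quotient.mk (Equiv.Perm.SameCycle.setoid g) x).out) = x := by
  have hrel : g.SameCycle ((Quotient.mk (Equiv.Perm.SameCycle.setoid g) x).out) x :=
    Quotient.mk_out (s := Equiv.Perm.SameCycle.setoid g) x
  obtain ⟨n, _, h⟩ := (isCycleOn_ob g _).exists_pow_eq (self_mem_ob g _) (mem_ob.2 hrel)
  exact ⟨n, h⟩

/-- Chosen exponent mapping the representative of the orbit of `x` to `x`. -/
noncomputable def cexp (x : D) : ℕ := Classical.choose (exists_pow_out_eq g x)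

lemma cexp_spec (x : D) :
    (g ^ cexp g x) ((Quotient.mk (Equiv.Perm.SameCycle.setoid g) x).out) = x :=
  Classical.choose_spec (exists_pow_out_eq g x)

lemma fixW {m : ℕ} (W : Π q : Qt g, {W : FreeSemigroup D //
      W.length ≤ m ∧ ∀ d ∈ W.1 :: W.2, (g ^ perQ g q) d = d}) (q : Qt g) :
    FreeSemigroup.map ⇑(g ^ per g q.out) ((W q).1) = (W q).1 := by
  rw [fs_map_fixed_iff, ← perQ_out]
  exact (W q).2.2

noncomputable def mainEquiv (m : ℕ) :
    {f : {f : D → FreeSemigroup D // ∀ x : D, (f x).length ≤ m} //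
        f.1 ∘ ⇑g = ⇑(FreeSemigroup.map ⇑g) ∘ f.1} ≃
      Π q : Qt g, {W : FreeSemigroup D //
        W.length ≤ m ∧ ∀ d ∈ W.1 :: W.2, (g ^ perQ g q) d = d} where
  toFun f := fun q => ⟨f.1.1 q.out, f.1.2 q.out, by
    rw [← fs_map_fixed_iff]
    have h1 : (g ^ perQ g q) q.out = q.out := by
      rw [perQ_out]
      exact (pow_apply_eq_iff g q.out).2 dvd_rfl
    have h2 := equivariant_pow g f.1 f.2 (perQ g q) q.out
    rw [h1] at h2
    exact h2.symm⟩
  invFun W := ⟨⟨fun x => FreeSemigroup.map ⇑(g ^ cexp g x)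
      ((W (Quotient.mk (Equiv.Perm.SameCycle.setoid g) x)).1),
    fun x => by rw [FreeSemigroup.length_map]; exact (W _).2.1⟩, by
    funext x
    show FreeSemigroup.map ⇑(g ^ cexp g (g x)) _
        = FreeSemigroup.map ⇑g (FreeSemigroup.map ⇑(g ^ cexp g x) _)
    have hq : Quotient.mk (Equiv.Perm.SameCycle.setoid g) (g x)
        = Quotient.mk (Equiv.Perm.SameCycle.setoid g) x :=
      Quot.sound ((Equiv.Perm.sameCycle_apply_left).2 (Equiv.Perm.SameCycle.refl g x))
    have hs1 := cexp_spec g (g x)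
    rw [hq] at hs1
    rw [hq, fs_map_comp]
    have hcomp : ⇑g ∘ ⇑(g ^ cexp g x) = ⇑(g ^ (cexp g x + 1)) := by
      funext z
      rw [pow_succ']
      rfl
    rw [hcomp]
    apply map_pow_eq_of_apply_eq g
      (r := (Quotient.mk (Equiv.Perm.SameCycle.setoid g) x).out) (fixW g W _)
    rw [hs1]
    have h5 : (g ^ (cexp g x + 1)) ((Quotient.mk (Equiv.Perm.SameCycle.setoid g) x).out)
        = g ((g ^ cexp g x) ((Quotient.mk (Equiv.Perm.SameCycle.setoid g) x).out)) := by
      rw [pow_succ']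
      rfl
    rw [h5, cexp_spec g x]⟩
  left_inv f := by
    apply Subtype.ext
    apply Subtype.ext
    funext x
    show FreeSemigroup.map ⇑(g ^ cexp g x)
        (f.1.1 (Quotient.mk (Equiv.Perm.SameCycle.setoid g) x).out) = f.1.1 x
    rw [← equivariant_pow g f.1 f.2 (cexp g x) _, cexp_spec g x]
  right_inv W := by
    funext q
    apply Subtype.ext
    show FreeSemigroup.map ⇑(g ^ cexp g q.out)
        ((W (Quotient.mk (Equiv.Perm.SameCycle.setoid g) q.out)).1) = (W q).1
    have hq : Quotient.mk (Equiv.Perm.SameCycle.setoid g) q.out = q := Quotient.out_eq q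
    have hs := cexp_spec g q.out
    rw [hq] at hs ⊢
    obtain ⟨s, hsd⟩ := (pow_apply_eq_iff g q.out).1 hs
    rw [hsd, pow_mul]
    exact map_pow_fixed (fixW g W q) s

end Main

/-- If `g ∈ Sym(D)` has cycle type `k₁, …, k_ℓ`, then the number of `f ∈ Ω`
(maps `f : D → {W ∈ D⁺ : |W| ≤ m}`) with `f ∘ g = φ_g ∘ f` is
`∏_{i=1}^ℓ (Σ_{k=1}^m (Σ_{j ∣ kᵢ} j·c(g,j))^k)`. -/
theorem card_fixed_maps_eq_prod
    {D : Type*} [Fintype D] [DecidableEq D] {m : ℕ} (hm : 1 ≤ m)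
    (g : Equiv.Perm D) (ℓ : ℕ) (k : Fin ℓ → ℕ)
    (hk : Multiset.map k Finset.univ.val = fullCycleType g) :
    Nat.card {f : {f : D → FreeSemigroup D // ∀ x : D, (f x).length ≤ m} //
        f.1 ∘ ⇑g = ⇑(FreeSemigroup.map ⇑g) ∘ f.1}
      = ∏ i : Fin ℓ, ∑ kk ∈ Finset.Icc 1 m,
          (∑ j ∈ (k i).divisors, j * cycleCount g j) ^ kk := by
  classical
  set G : ℕ → ℕ := fun K => ∑ kk ∈ Finset.Icc 1 m,
    (∑ j ∈ K.divisors, j * cycleCount g j) ^ kk with hG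
  have step1 : Nat.card {f : {f : D → FreeSemigroup D // ∀ x : D, (f x).length ≤ m} //
      f.1 ∘ ⇑g = ⇑(FreeSemigroup.map ⇑g) ∘ f.1} = ∏ q : Qt g, G (perQ g q) := by
    rw [Nat.card_congr (mainEquiv g m), Nat.card_pi]
    refine Finset.prod_congr rfl fun q _ => ?_
    rw [card_words (fun d => (g ^ perQ g q) d = d) m, hG]
    rw [card_fixed_pow g (perQ_pos g q).ne']
  rw [step1]
  have step2 : ∏ q : Qt g, G (perQ g q) = ∏ i : Fin ℓ, G (k i) := by
    rw [Finset.prod_eq_multiset_prod, Finset.prod_eq_multiset_prod]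
    rw [show Multiset.map (fun q => G (perQ g q)) (Finset.univ : Finset (Qt g)).val
        = Multiset.map G (Multiset.map (perQ g) (Finset.univ : Finset (Qt g)).val) from
      (Multiset.map_map G (perQ g) _).symm]
    rw [map_perQ_eq_fullCycleType, ← hk, Multiset.map_map]
    rfl
  rw [step2]
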